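/- Let A and X be finite nonempty subsets of a commutative group Z such that X minimizes the ratio |A+X'|/|X'| over all nonempty subsets X' ⊆ X, with K = |A+X|/|X|. Then |nA+X| ≤ Kⁿ·|X| for all n ≥ 1. -/

import Mathlib

open Pointwise

theorem stmt_14 {Z : Type*} [AddCommGroup Z] [DecidableEq Z] (A X : Finset Z)
    (hA : A.Nonempty) (hX : X.Nonempty) (K : ℝ)
    (hK : ((A + X).card : ℝ) = K * X.card)
    (h : ∀ X' ⊆ X, X'.Nonempty → K * X'.card ≤ ((A + X').card : ℝ)) :
    ∀ n : ℕ, 1 ≤ n → ((n • A + X).card : ℝ) ≤ K ^ n * X.card := by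
  have hXpos : (0 : ℝ) < X.card := by exact_mod_cast hX.card_pos
  have hK0 : 0 ≤ K := by
    nlinarith [Nat.cast_nonneg (α := ℝ) (A + X).card]
  have hpet : ∀ X' ⊆ X, (X + A).card * X'.card ≤ (X' + A).card * X.card := by
    intro X' hX'
    rcases X'.eq_empty_or_nonempty with rfl | hne
    · simp
    have h1 := h X' hX' hne
    have hr : ((X + A).card : ℝ) * X'.card ≤ ((X' + A).card : ℝ) * X.card := by
      rw [add_comm X A, add_comm X' A, hK]
      calc K * X.card * X'.card = K * X'.card * X.card := by ring
        _ ≤ ((A + X').card : ℝ) * X.card := by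
          exact mul_le_mul_of_nonneg_right h1 (le_of_lt hXpos)
    exact_mod_cast hr
  intro n hn
  induction n, hn using Nat.le_induction with
  | base => simpa [hK] using le_of_eq hK
  | succ m hm ih =>
    have key := Finset.pluennecke_petridis_inequality_add (A := X) (B := A) (m • A) hpet
    have heq : (m + 1) • A + X = X + A + m • A := by
      rw [succ_nsmul]
      abel
    have keyR : ((X + A + m • A).card : ℝ) * X.card ≤
        ((X + A).card : ℝ) * ((X + m • A).card : ℝ) := by
      rw [show X + A + m • A = m • A + X + A by abel, add_comm X (m • A)]
      exact_mod_cast key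
    have h2 : ((X + A).card : ℝ) = K * X.card := by rw [add_comm X A]; exact hK
    have h3 : ((X + m • A).card : ℝ) ≤ K ^ m * X.card := by
      rw [add_comm X (m • A)]; exact ih
    calc (((m + 1) • A + X).card : ℝ)
        = ((X + A + m • A).card : ℝ) := by rw [heq]
      _ ≤ ((X + A).card : ℝ) * ((X + m • A).card : ℝ) / X.card := by
          rw [le_div_iff₀ hXpos]; exact keyR
      _ ≤ (K * X.card) * (K ^ m * X.card) / X.card := by
          gcongr
          rw [h2]
      _ = K ^ (m + 1) * X.card := by field_simp; ring
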